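/- Let {I_n, f_n} and {J_n, g_n} be two inverse sequences of closed intervals and single-valued quasi Markov bonding functions f_n : I_{n+1} → I_n and g_n : J_{n+1} → J_n that follow the same pattern. Then varprojlim{I_n, f_n} and varprojlim{J_n, g_n} are homeomorphic. -/

import Mathlib

/-- `(A₁, A₂)` is a Markov pair for the (single-valued, not necessarily continuous)
function `f : [x₁,y₁] → [x₂,y₂]`. -/
def MarkovPair (x₁ y₁ x₂ y₂ : ℝ) (f : ℝ → ℝ) (A₁ A₂ : Set ℝ) : Prop :=
  IsClosed A₁ ∧ IsTotallyDisconnected A₁ ∧ A₁ ⊆ Set.Icc x₁ y₁ ∧ x₁ ∈ A₁ ∧ y₁ ∈ A₁ ∧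
  IsClosed A₂ ∧ IsTotallyDisconnected A₂ ∧ A₂ ⊆ Set.Icc x₂ y₂ ∧ x₂ ∈ A₂ ∧ y₂ ∈ A₂ ∧
  Set.MapsTo f A₁ A₂ ∧
  ∀ a b : ℝ, a ∈ A₁ → b ∈ A₁ → a < b → Set.Ioo a b ⊆ Set.Icc x₁ y₁ \ A₁ →
    ContinuousOn f (Set.Ioo a b) ∧
    (StrictMonoOn f (Set.Ioo a b) ∨ StrictAntiOn f (Set.Ioo a b)) ∧
    (∃ c ∈ A₂, Filter.Tendsto f (nhdsWithin a (Set.Ioi a)) (nhds c)) ∧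
    (∃ c ∈ A₂, Filter.Tendsto f (nhdsWithin b (Set.Iio b)) (nhds c))

/-- The inverse sequences `{[x n, y n], f n}` and `{[u n, v n], g n}` of quasi Markov
functions follow the same pattern with respect to `(A n)` and `(B n)`. -/
def FollowSamePattern (x y u v : ℕ → ℝ) (f g : ℕ → ℝ → ℝ) (A B : ℕ → Set ℝ) : Prop :=
  (∀ n, MarkovPair (x (n+1)) (y (n+1)) (x n) (y n) (f n) (A (n+1)) (A n)) ∧
  (∀ n, MarkovPair (u (n+1)) (v (n+1)) (u n) (v n) (g n) (B (n+1)) (B n)) ∧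
  ∃ τ φ ψ : ℕ → ℝ → ℝ,
    StrictMonoOn (τ 0) (A 0) ∧ Set.BijOn (τ 0) (A 0) (B 0) ∧
    (∀ n, StrictMonoOn (φ n) (A (n+1)) ∧ Set.BijOn (φ n) (A (n+1)) (A n)) ∧
    (∀ n, StrictMonoOn (ψ n) (B (n+1)) ∧ Set.BijOn (ψ n) (B (n+1)) (B n)) ∧
    (∀ n, Set.MapsTo (τ (n+1)) (A (n+1)) (B (n+1))) ∧
    (∀ n, ∀ a ∈ A (n+1), ψ n (τ (n+1) a) = τ n (φ n a)) ∧
    (∀ n, ∀ a ∈ A (n+1), ∀ t ∈ A n, (f n a = t ↔ g n (τ (n+1) a) = τ n t)) ∧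
    (∀ n, ∀ a b : ℝ, a ∈ A (n+1) → b ∈ A (n+1) → a < b →
      Set.Ioo a b ⊆ Set.Icc (x (n+1)) (y (n+1)) \ A (n+1) →
      ∀ c ∈ A n,
        (Filter.Tendsto (f n) (nhdsWithin a (Set.Ioi a)) (nhds c) ↔
          Filter.Tendsto (g n) (nhdsWithin (τ (n+1) a) (Set.Ioi (τ (n+1) a))) (nhds (τ n c))) ∧
        (Filter.Tendsto (f n) (nhdsWithin b (Set.Iio b)) (nhds c) ↔
          Filter.Tendsto (g n) (nhdsWithin (τ (n+1) b) (Set.Iio (τ (n+1) b))) (nhds (τ n c))))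


open Set Filter

namespace Stmt15Aux

noncomputable def gapL (A : Set ℝ) (p : ℝ) : ℝ := sSup (A ∩ Set.Iic p)
noncomputable def gapR (A : Set ℝ) (p : ℝ) : ℝ := sInf (A ∩ Set.Ici p)

structure GoodSet (x y : ℝ) (A : Set ℝ) : Prop where
  closed : IsClosed A
  subset : A ⊆ Icc x y
  left : x ∈ A
  right : y ∈ A

lemma gap_not_mem {A : Set ℝ} {a b s : ℝ} (hgap : Ioo a b ∩ A = ∅)
    (h1 : a < s) (h2 : s < b) (hsA : s ∈ A) : False := by
  rw [Set.eq_empty_iff_forall_notMem] at hgap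
  exact hgap s ⟨⟨h1, h2⟩, hsA⟩

lemma gap_spec {x y : ℝ} {A : Set ℝ} (hA : GoodSet x y A) {p : ℝ}
    (hp : p ∈ Icc x y) (hpA : p ∉ A) :
    gapL A p ∈ A ∧ gapR A p ∈ A ∧ gapL A p < p ∧ p < gapR A p ∧
      Ioo (gapL A p) (gapR A p) ∩ A = ∅ := by
  have hne : (A ∩ Iic p).Nonempty := ⟨x, hA.left, hp.1⟩
  have hbdd : BddAbove (A ∩ Iic p) := ⟨p, fun s hs => hs.2⟩
  have hclosedL : IsClosed (A ∩ Iic p) := hA.closed.inter isClosed_Iic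
  have hLmem : gapL A p ∈ A ∩ Iic p := hclosedL.csSup_mem hne hbdd
  have hne' : (A ∩ Ici p).Nonempty := ⟨y, hA.right, hp.2⟩
  have hbdd' : BddBelow (A ∩ Ici p) := ⟨p, fun s hs => hs.2⟩
  have hclosedR : IsClosed (A ∩ Ici p) := hA.closed.inter isClosed_Ici
  have hRmem : gapR A p ∈ A ∩ Ici p := hclosedR.csInf_mem hne' hbdd'
  refine ⟨hLmem.1, hRmem.1, lt_of_le_of_ne hLmem.2 ?_, lt_of_le_of_ne hRmem.2 ?_, ?_⟩
  · intro h; exact hpA (h ▸ hLmem.1)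
  · intro h; exact hpA (h ▸ hRmem.1)
  · ext s
    simp only [mem_inter_iff, mem_Ioo, mem_empty_iff_false, iff_false, not_and]
    intro hs1 hsA
    rcases le_or_gt s p with h | h
    · exact absurd (le_csSup hbdd ⟨hsA, h⟩) (not_le.2 hs1.1)
    · exact absurd (csInf_le hbdd' ⟨hsA, h.le⟩) (not_le.2 hs1.2)

lemma gap_eq {A : Set ℝ} {a b : ℝ} (ha : a ∈ A) (hb : b ∈ A)
    (hgap : Ioo a b ∩ A = ∅) {p : ℝ} (hp : p ∈ Ioo a b) :
    gapL A p = a ∧ gapR A p = b := by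
  constructor
  · refine le_antisymm (csSup_le ⟨a, ha, hp.1.le⟩ ?_) (le_csSup ⟨p, fun s hs => hs.2⟩ ⟨ha, hp.1.le⟩)
    rintro s ⟨hsA, hsp⟩
    by_contra h
    push_neg at h
    exact gap_not_mem hgap h (lt_of_le_of_lt hsp hp.2) hsA
  · refine le_antisymm (csInf_le ⟨p, fun s hs => hs.2⟩ ⟨hb, hp.2.le⟩) (le_csInf ⟨b, hb, hp.2.le⟩ ?_)
    rintro s ⟨hsA, hsp⟩
    by_contra h
    push_neg at h
    exact gap_not_mem hgap (lt_of_lt_of_le hp.1 hsp) h hsA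

/-- The key properties of a monotone extension datum on gaps. -/
structure ExtFun (A : Set ℝ) (t h : ℝ → ℝ) : Prop where
  eqOn : EqOn h t A
  gapMaps : ∀ a b : ℝ, a ∈ A → b ∈ A → a < b → Ioo a b ∩ A = ∅ →
    MapsTo h (Ioo a b) (Ioo (t a) (t b))
  gapMono : ∀ a b : ℝ, a ∈ A → b ∈ A → a < b → Ioo a b ∩ A = ∅ →
    StrictMonoOn h (Ioo a b)
  gapSurj : ∀ a b : ℝ, a ∈ A → b ∈ A → a < b → Ioo a b ∩ A = ∅ →
    SurjOn h (Ioo a b) (Ioo (t a) (t b))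

lemma ext_mono {x y : ℝ} {A : Set ℝ} {t h : ℝ → ℝ}
    (hA : GoodSet x y A)
    (ht : StrictMonoOn t A) (he : ExtFun A t h) :
    StrictMonoOn h (Icc x y) := by
  intro p hp q hq hpq
  by_cases hpA : p ∈ A <;> by_cases hqA : q ∈ A
  · rw [he.eqOn hpA, he.eqOn hqA]; exact ht hpA hqA hpq
  · obtain ⟨haA, hbA, hap, hpb, hgap⟩ := gap_spec hA hq hqA
    have hpa : p ≤ gapL A q := by
      by_contra hc
      push_neg at hc
      exact gap_not_mem hgap hc (lt_trans hpq hpb) hpA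
    calc h p = t p := he.eqOn hpA
    _ ≤ t (gapL A q) := ht.monotoneOn hpA haA hpa
    _ < h q := (he.gapMaps _ _ haA hbA (lt_trans hap hpb) hgap ⟨hap, hpb⟩).1
  · obtain ⟨haA, hbA, hap, hpb, hgap⟩ := gap_spec hA hp hpA
    have hbq : gapR A p ≤ q := by
      by_contra hc
      push_neg at hc
      exact gap_not_mem hgap (lt_trans hap hpq) hc hqA
    calc h p < t (gapR A p) := (he.gapMaps _ _ haA hbA (lt_trans hap hpb) hgap ⟨hap, hpb⟩).2
    _ ≤ t q := ht.monotoneOn hbA hqA hbq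
    _ = h q := (he.eqOn hqA).symm
  · obtain ⟨haA, hbA, hap, hpb, hgap⟩ := gap_spec hA hp hpA
    rcases lt_or_ge q (gapR A p) with hq' | hq'
    · -- same gap
      have hq2 : q ∈ Ioo (gapL A p) (gapR A p) := ⟨lt_trans hap hpq, hq'⟩
      exact he.gapMono _ _ haA hbA (lt_trans hap hpb) hgap ⟨hap, hpb⟩ hq2 hpq
    · obtain ⟨haA', hbA', hap', hpb', hgap'⟩ := gap_spec hA hq hqA
      have h1 : h p < t (gapR A p) :=
        (he.gapMaps _ _ haA hbA (lt_trans hap hpb) hgap ⟨hap, hpb⟩).2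
      have h3 : t (gapL A q) < h q :=
        (he.gapMaps _ _ haA' hbA' (lt_trans hap' hpb') hgap' ⟨hap', hpb'⟩).1
      have h2 : gapR A p ≤ gapL A q := by
        by_contra hc
        push_neg at hc
        have : gapR A p ∈ Ioo (gapL A q) (gapR A q) :=
          ⟨hc, lt_of_le_of_lt hq' hpb'⟩
        exact gap_not_mem hgap' this.1 this.2 hbA
      exact lt_of_lt_of_le h1 (le_trans (ht.monotoneOn hbA haA' h2) h3.le) |>.trans_le le_rfl
      

lemma ext_mapsTo {x y u v : ℝ} {A B : Set ℝ} {t h : ℝ → ℝ}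
    (hA : GoodSet x y A) (hB : GoodSet u v B)
    (htB : MapsTo t A B) (he : ExtFun A t h) :
    MapsTo h (Icc x y) (Icc u v) := by
  intro p hp
  by_cases hpA : p ∈ A
  · rw [he.eqOn hpA]; exact hB.subset (htB hpA)
  · obtain ⟨haA, hbA, hap, hpb, hgap⟩ := gap_spec hA hp hpA
    have := he.gapMaps _ _ haA hbA (lt_trans hap hpb) hgap ⟨hap, hpb⟩
    have h1 := hB.subset (htB haA)
    have h2 := hB.subset (htB hbA)
    exact ⟨le_trans h1.1 this.1.le, le_trans this.2.le h2.2⟩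

lemma ext_surj {x y u v : ℝ} {A B : Set ℝ} {t h : ℝ → ℝ}
    (hA : GoodSet x y A) (hB : GoodSet u v B)
    (ht : StrictMonoOn t A) (htB : BijOn t A B) (he : ExtFun A t h) :
    SurjOn h (Icc x y) (Icc u v) := by
  intro w hw
  by_cases hwB : w ∈ B
  · obtain ⟨s, hsA, hts⟩ := htB.surjOn hwB
    exact ⟨s, hA.subset hsA, (he.eqOn hsA).trans hts⟩
  · obtain ⟨hcB, hdB, hcw, hwd, hgapB⟩ := gap_spec hB hw hwB
    obtain ⟨a, haA, hta⟩ := htB.surjOn hcB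
    obtain ⟨b, hbA, htb⟩ := htB.surjOn hdB
    have hab : a < b := by
      have : t a < t b := by rw [hta, htb]; exact lt_trans hcw hwd
      exact (ht.lt_iff_lt haA hbA).1 this
    have hgap : Ioo a b ∩ A = ∅ := by
      ext s
      simp only [mem_inter_iff, mem_Ioo, mem_empty_iff_false, iff_false, not_and]
      intro hs hsA
      have h1 : t s ∈ Ioo (gapL B w) (gapR B w) := by
        rw [← hta, ← htb]
        exact ⟨ht haA hsA hs.1, ht hsA hbA hs.2⟩
      exact gap_not_mem hgapB h1.1 h1.2 (htB.mapsTo hsA)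
    obtain ⟨p, hpI, hhp⟩ := he.gapSurj _ _ haA hbA hab hgap (by rw [hta, htb]; exact ⟨hcw, hwd⟩)
    refine ⟨p, ?_, hhp⟩
    have h1 := hA.subset haA
    have h2 := hA.subset hbA
    exact ⟨le_trans h1.1 hpI.1.le, le_trans hpI.2.le h2.2⟩

-- cont
lemma mono_gap {a b c d : ℝ} (hab : a < b) {f : ℝ → ℝ}
    (hc : ContinuousOn f (Ioo a b)) (hm : StrictMonoOn f (Ioo a b))
    (hl : Tendsto f (nhdsWithin a (Ioi a)) (nhds c))
    (hr : Tendsto f (nhdsWithin b (Iio b)) (nhds d)) :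
    c < d ∧ MapsTo f (Ioo a b) (Ioo c d) ∧ SurjOn f (Ioo a b) (Ioo c d) := by
  have hmaps : MapsTo f (Ioo a b) (Ioo c d) := by
    intro p hp
    constructor
    · have hmid : (a + p) / 2 ∈ Ioo a b := ⟨by linarith [hp.1], by linarith [hp.2]⟩
      have h1 : c ≤ f ((a + p) / 2) := by
        refine le_of_tendsto hl ?_
        filter_upwards [Ioo_mem_nhdsGT_of_mem (⟨le_refl a, by linarith [hp.1]⟩ :
          a ∈ Ico a ((a + p) / 2))] with z hz
        exact (hm ⟨hz.1, lt_trans hz.2 hmid.2⟩ hmid (hz.2)).le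
      exact lt_of_le_of_lt h1 (hm hmid hp (by linarith [hp.1]))
    · have hmid : (p + b) / 2 ∈ Ioo a b := ⟨by linarith [hp.1], by linarith [hp.2]⟩
      have h1 : f ((p + b) / 2) ≤ d := by
        refine ge_of_tendsto hr ?_
        filter_upwards [Ioo_mem_nhdsLT_of_mem (⟨by linarith [hp.2], le_refl b⟩ :
          b ∈ Ioc ((p + b) / 2) b)] with z hz
        exact (hm hmid ⟨lt_trans hmid.1 hz.1, hz.2⟩ hz.1).le
      exact lt_of_lt_of_le (hm hp hmid (by linarith [hp.2])) h1
  have hcd : c < d := by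
    have hp : (a + b) / 2 ∈ Ioo a b := ⟨by linarith, by linarith⟩
    have := hmaps hp
    exact lt_trans this.1 this.2
  refine ⟨hcd, hmaps, ?_⟩
  intro w hw
  have h1 : ∀ᶠ z in nhdsWithin a (Ioi a), f z < w := hl.eventually_lt_const hw.1
  have h2 : ∀ᶠ z in nhdsWithin b (Iio b), w < f z := hr.eventually_const_lt hw.2
  have hmem1 : ∀ᶠ z in nhdsWithin a (Ioi a), z ∈ Ioo a b :=
    eventually_mem_nhdsWithin.mono (fun z hz => hz) |>.mp
      (eventually_of_mem (Ioo_mem_nhdsGT_of_mem (⟨le_refl a, hab⟩ : a ∈ Ico a b))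
        (fun z hz _ => hz))
  have hmem2 : ∀ᶠ z in nhdsWithin b (Iio b), z ∈ Ioo a b :=
    eventually_mem_nhdsWithin.mono (fun z hz => hz) |>.mp
      (eventually_of_mem (Ioo_mem_nhdsLT_of_mem (⟨hab, le_refl b⟩ : b ∈ Ioc a b))
        (fun z hz _ => hz))
  obtain ⟨p₁, hfp₁, hp₁⟩ := (h1.and hmem1).exists
  obtain ⟨p₂, hfp₂, hp₂⟩ := (h2.and hmem2).exists
  have hp12 : p₁ < p₂ := by
    by_contra hcon
    push_neg at hcon
    rcases eq_or_lt_of_le hcon with h | h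
    · rw [h] at hfp₂; linarith
    · exact absurd (hm hp₂ hp₁ h) (by linarith)
  have hIcc : Icc p₁ p₂ ⊆ Ioo a b := fun z hz => ⟨lt_of_lt_of_le hp₁.1 hz.1,
    lt_of_le_of_lt hz.2 hp₂.2⟩
  obtain ⟨z, hz, hfz⟩ := intermediate_value_Icc hp12.le (hc.mono hIcc)
    (⟨hfp₁.le, hfp₂.le⟩ : w ∈ Icc (f p₁) (f p₂))
  exact ⟨z, hIcc hz, hfz⟩

lemma anti_gap {a b c d : ℝ} (hab : a < b) {f : ℝ → ℝ}
    (hc : ContinuousOn f (Ioo a b)) (hm : StrictAntiOn f (Ioo a b))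
    (hl : Tendsto f (nhdsWithin a (Ioi a)) (nhds c))
    (hr : Tendsto f (nhdsWithin b (Iio b)) (nhds d)) :
    d < c ∧ MapsTo f (Ioo a b) (Ioo d c) ∧ SurjOn f (Ioo a b) (Ioo d c) := by
  have := mono_gap hab (f := fun z => -(f z)) (hc.neg)
    (fun p hp q hq hpq => neg_lt_neg (hm hp hq hpq))
    (hl.neg) (hr.neg)
  refine ⟨by linarith [this.1], ?_, ?_⟩
  · intro p hp
    have h2 := this.2.1 hp
    simp only [mem_Ioo] at h2
    exact ⟨by linarith [h2.2], by linarith [h2.1]⟩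
  · intro w hw
    obtain ⟨z, hz, hfz⟩ := this.2.2 (⟨by linarith [hw.2], by linarith [hw.1]⟩ :
      -w ∈ Ioo (-c) (-d))
    refine ⟨z, hz, ?_⟩
    have : -(f z) = -w := hfz
    linarith

-- affine extension
open scoped Classical in
noncomputable def affExt (A : Set ℝ) (t : ℝ → ℝ) (p : ℝ) : ℝ :=
  if p ∈ A then t p
  else t (gapL A p) + (p - gapL A p) * (t (gapR A p) - t (gapL A p)) / (gapR A p - gapL A p)

lemma affExt_extFun {A : Set ℝ} {t : ℝ → ℝ} (ht : StrictMonoOn t A) :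
    ExtFun A t (affExt A t) := by
  have key : ∀ a b : ℝ, a ∈ A → b ∈ A → a < b → Ioo a b ∩ A = ∅ →
      ∀ p ∈ Ioo a b, affExt A t p = t a + (p - a) * (t b - t a) / (b - a) := by
    intro a b ha hb hab hgap p hp
    have hpA : p ∉ A := fun h => gap_not_mem hgap hp.1 hp.2 h
    obtain ⟨hL, hR⟩ := gap_eq ha hb hgap hp
    simp only [affExt, if_neg hpA, hL, hR]
  refine ⟨?_, ?_, ?_, ?_⟩
  · intro p hp; simp only [affExt, if_pos hp]
  · intro a b ha hb hab hgap p hp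
    rw [key a b ha hb hab hgap p hp]
    have h1 : t a < t b := ht ha hb hab
    have h2 : (0:ℝ) < b - a := by linarith [hab]
    constructor
    · have : 0 < (p - a) * (t b - t a) / (b - a) :=
        div_pos (mul_pos (by linarith [hp.1]) (by linarith)) h2
      linarith
    · have : (p - a) * (t b - t a) / (b - a) < t b - t a := by
        rw [div_lt_iff₀ h2]; nlinarith [hp.2]
      linarith
  · intro a b ha hb hab hgap p hp q hq hpq
    rw [key a b ha hb hab hgap p hp, key a b ha hb hab hgap q hq]
    have h1 : t a < t b := ht ha hb hab
    have h2 : (0:ℝ) < b - a := by linarith [hab]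
    have : (p - a) * (t b - t a) / (b - a) < (q - a) * (t b - t a) / (b - a) := by
      apply div_lt_div_of_pos_right ?_ h2
      nlinarith
    linarith
  · intro a b ha hb hab hgap w hw
    have h1 : t a < t b := ht ha hb hab
    have h2 : (0:ℝ) < b - a := by linarith [hab]
    have h3 : (0:ℝ) < t b - t a := by linarith
    have h2' : b - a ≠ 0 := ne_of_gt h2
    have h3' : t b - t a ≠ 0 := ne_of_gt h3
    have hX1 : 0 < (w - t a) * (b - a) / (t b - t a) :=
      div_pos (mul_pos (by linarith [hw.1]) h2) h3
    have hX2 : (w - t a) * (b - a) / (t b - t a) < b - a := by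
      rw [div_lt_iff₀ h3]; nlinarith [hw.2]
    refine ⟨a + (w - t a) * (b - a) / (t b - t a), ⟨by linarith, by linarith⟩, ?_⟩
    rw [key a b ha hb hab hgap _ ⟨by linarith, by linarith⟩]
    field_simp
    ring

open scoped Classical in
noncomputable def liftExt (A : Set ℝ) (τ gn hn fn : ℝ → ℝ) (p : ℝ) : ℝ :=
  if p ∈ A then τ p
  else sInf {s : ℝ | s ∈ Ioo (τ (gapL A p)) (τ (gapR A p)) ∧ gn s = hn (fn p)}

lemma liftExt_spec {A : Set ℝ} {τ gn hn fn : ℝ → ℝ} {a b p s0 : ℝ}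
    (hpA : p ∉ A) (ha : a ∈ A) (hb : b ∈ A) (hgap : Ioo a b ∩ A = ∅) (hp : p ∈ Ioo a b)
    (hs0 : s0 ∈ Ioo (τ a) (τ b)) (hgs0 : gn s0 = hn (fn p))
    (hinj : InjOn gn (Ioo (τ a) (τ b))) :
    liftExt A τ gn hn fn p = s0 := by
  obtain ⟨hL, hR⟩ := gap_eq ha hb hgap hp
  have hset : {s : ℝ | s ∈ Ioo (τ (gapL A p)) (τ (gapR A p)) ∧ gn s = hn (fn p)} = {s0} := by
    rw [hL, hR]; ext s
    simp only [mem_setOf_eq, mem_singleton_iff]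
    constructor
    · rintro ⟨h1, h2⟩; exact hinj h1 hs0 (h2.trans hgs0.symm)
    · rintro rfl; exact ⟨hs0, hgs0⟩
  simp only [liftExt, if_neg hpA, hset, csInf_singleton]

lemma gap_image {A B : Set ℝ} {τ : ℝ → ℝ} (hτ : StrictMonoOn τ A) (hb : BijOn τ A B)
    {a b : ℝ} (ha : a ∈ A) (hbb : b ∈ A) (hgap : Ioo a b ∩ A = ∅) :
    Ioo (τ a) (τ b) ∩ B = ∅ := by
  rw [eq_empty_iff_forall_notMem]
  rintro s ⟨hs, hsB⟩
  obtain ⟨e, heA, rfl⟩ := hb.surjOn hsB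
  exact gap_not_mem hgap ((hτ.lt_iff_lt ha heA).1 hs.1) ((hτ.lt_iff_lt heA hbb).1 hs.2) heA

lemma mono_restrict {x1 y1 u1 v1 c d : ℝ} {A1 B1 : Set ℝ} {hn τ1 : ℝ → ℝ}
    (hA1sub : A1 ⊆ Icc x1 y1) (hB1sub : B1 ⊆ Icc u1 v1)
    (hτmaps : MapsTo τ1 A1 B1)
    (hnm : StrictMonoOn hn (Icc x1 y1)) (hnsurj : SurjOn hn (Icc x1 y1) (Icc u1 v1))
    (hneq : EqOn hn τ1 A1) (hc : c ∈ A1) (hd : d ∈ A1) (hcd : c < d) :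
    MapsTo hn (Ioo c d) (Ioo (τ1 c) (τ1 d)) ∧ SurjOn hn (Ioo c d) (Ioo (τ1 c) (τ1 d)) := by
  have hcI : c ∈ Icc x1 y1 := hA1sub hc
  have hdI : d ∈ Icc x1 y1 := hA1sub hd
  have hsub : Ioo c d ⊆ Icc x1 y1 := fun z hz => ⟨hcI.1.trans hz.1.le, hz.2.le.trans hdI.2⟩
  constructor
  · intro z hz
    constructor
    · rw [← hneq hc]; exact hnm hcI (hsub hz) hz.1
    · rw [← hneq hd]; exact hnm (hsub hz) hdI hz.2
  · intro w hw
    have hwI : w ∈ Icc u1 v1 := by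
      have h1 := hB1sub (hτmaps hc)
      have h2 := hB1sub (hτmaps hd)
      exact ⟨h1.1.trans hw.1.le, hw.2.le.trans h2.2⟩
    obtain ⟨z, hzI, hz⟩ := hnsurj hwI
    refine ⟨z, ⟨?_, ?_⟩, hz⟩
    · by_contra hcon
      push_neg at hcon
      have : hn z ≤ hn c := hnm.monotoneOn hzI hcI hcon
      rw [hz, hneq hc] at this
      exact absurd this (not_le.2 hw.1)
    · by_contra hcon
      push_neg at hcon
      have : hn d ≤ hn z := hnm.monotoneOn hdI hzI hcon
      rw [hz, hneq hd] at this
      exact absurd this (not_le.2 hw.2)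

lemma step {x2 y2 x1 y1 u2 v2 u1 v1 : ℝ} {A2 A1 B2 B1 : Set ℝ} {f g τ2 τ1 hn : ℝ → ℝ}
    (hMf : MarkovPair x2 y2 x1 y1 f A2 A1)
    (hMg : MarkovPair u2 v2 u1 v1 g B2 B1)
    (hτ1 : StrictMonoOn τ1 A1) (hτ1b : Set.BijOn τ1 A1 B1)
    (hτ2 : StrictMonoOn τ2 A2) (hτ2b : Set.BijOn τ2 A2 B2)
    (hfg : ∀ a ∈ A2, ∀ t ∈ A1, (f a = t ↔ g (τ2 a) = τ1 t))
    (hlim : ∀ a b : ℝ, a ∈ A2 → b ∈ A2 → a < b → Ioo a b ⊆ Icc x2 y2 \ A2 →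
      ∀ c ∈ A1,
        (Tendsto f (nhdsWithin a (Ioi a)) (nhds c) ↔
          Tendsto g (nhdsWithin (τ2 a) (Ioi (τ2 a))) (nhds (τ1 c))) ∧
        (Tendsto f (nhdsWithin b (Iio b)) (nhds c) ↔
          Tendsto g (nhdsWithin (τ2 b) (Iio (τ2 b))) (nhds (τ1 c))))
    (hnm : StrictMonoOn hn (Icc x1 y1))
    (hnmaps : MapsTo hn (Icc x1 y1) (Icc u1 v1))
    (hnsurj : SurjOn hn (Icc x1 y1) (Icc u1 v1))
    (hneq : EqOn hn τ1 A1) :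
    ExtFun A2 τ2 (liftExt A2 τ2 g hn f) ∧
      ∀ p ∈ Icc x2 y2, g (liftExt A2 τ2 g hn f p) = hn (f p) := by
  obtain ⟨hA2c, hA2td, hA2sub, hx2, hy2, hA1c, hA1td, hA1sub, hx1, hy1, hfA, hfgap⟩ := hMf
  obtain ⟨hB2c, hB2td, hB2sub, hu2, hv2, hB1c, hB1td, hB1sub, hu1, hv1, hgB, hggap⟩ := hMg
  have GA2 : GoodSet x2 y2 A2 := ⟨hA2c, hA2sub, hx2, hy2⟩
  set lift := liftExt A2 τ2 g hn f with hliftdef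
  have gapcore : ∀ a b : ℝ, a ∈ A2 → b ∈ A2 → a < b → Ioo a b ∩ A2 = ∅ →
      MapsTo lift (Ioo a b) (Ioo (τ2 a) (τ2 b)) ∧ StrictMonoOn lift (Ioo a b) ∧
      SurjOn lift (Ioo a b) (Ioo (τ2 a) (τ2 b)) ∧
      ∀ p ∈ Ioo a b, g (lift p) = hn (f p) := by
    intro a b ha hb hab hgap
    have hsub : Ioo a b ⊆ Icc x2 y2 \ A2 := fun z hz =>
      ⟨⟨(hA2sub ha).1.trans hz.1.le, hz.2.le.trans (hA2sub hb).2⟩,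
        fun hzA => gap_not_mem hgap hz.1 hz.2 hzA⟩
    obtain ⟨hfc, hfm, ⟨c, hcA1, hlc⟩, ⟨d, hdA1, hld⟩⟩ := hfgap a b ha hb hab hsub
    have hglc : Tendsto g (nhdsWithin (τ2 a) (Ioi (τ2 a))) (nhds (τ1 c)) :=
      ((hlim a b ha hb hab hsub c hcA1).1).1 hlc
    have hgld : Tendsto g (nhdsWithin (τ2 b) (Iio (τ2 b))) (nhds (τ1 d)) :=
      ((hlim a b ha hb hab hsub d hdA1).2).1 hld
    have hτab : τ2 a < τ2 b := hτ2 ha hb hab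
    have hgapB : Ioo (τ2 a) (τ2 b) ∩ B2 = ∅ := gap_image hτ2 hτ2b ha hb hgap
    have hτaB : τ2 a ∈ B2 := hτ2b.mapsTo ha
    have hτbB : τ2 b ∈ B2 := hτ2b.mapsTo hb
    have hsubB : Ioo (τ2 a) (τ2 b) ⊆ Icc u2 v2 \ B2 := fun z hz =>
      ⟨⟨(hB2sub hτaB).1.trans hz.1.le, hz.2.le.trans (hB2sub hτbB).2⟩,
        fun hzB => gap_not_mem hgapB hz.1 hz.2 hzB⟩
    obtain ⟨hgc, hgm, -, -⟩ := hggap (τ2 a) (τ2 b) hτaB hτbB hτab hsubB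
    have hApts : ∀ p ∈ Ioo a b, p ∉ A2 := fun p hp hpA => gap_not_mem hgap hp.1 hp.2 hpA
    rcases hfm with fmono | fanti
    · -- f increasing on the gap
      obtain ⟨hcd, hfmaps, hfsurj⟩ := mono_gap hab hfc fmono hlc hld
      have hτcd : τ1 c < τ1 d := hτ1 hcA1 hdA1 hcd
      have gmono : StrictMonoOn g (Ioo (τ2 a) (τ2 b)) := by
        rcases hgm with gm | ga
        · exact gm
        · obtain ⟨h', -, -⟩ := anti_gap hτab hgc ga hglc hgld
          exact absurd hτcd (by linarith)
      obtain ⟨-, hgmaps, hgsurj⟩ := mono_gap hτab hgc gmono hglc hgld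
      obtain ⟨hnmapscd, hnsurjcd⟩ := mono_restrict hA1sub hB1sub hτ1b.mapsTo hnm hnsurj
        hneq hcA1 hdA1 hcd
      have hspec : ∀ p ∈ Ioo a b, lift p ∈ Ioo (τ2 a) (τ2 b) ∧ g (lift p) = hn (f p) := by
        intro p hp
        have hw : hn (f p) ∈ Ioo (τ1 c) (τ1 d) := hnmapscd (hfmaps hp)
        obtain ⟨s0, hs0I, hs0⟩ := hgsurj hw
        have := liftExt_spec (hApts p hp) ha hb hgap hp hs0I hs0 gmono.injOn
        rw [hliftdef, this]
        exact ⟨hs0I, hs0⟩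
      refine ⟨fun p hp => (hspec p hp).1, ?_, ?_, fun p hp => (hspec p hp).2⟩
      · intro p hp q hq hpq
        have h1 : g (lift p) < g (lift q) := by
          rw [(hspec p hp).2, (hspec q hq).2]
          have hfsubI : Ioo c d ⊆ Icc x1 y1 := fun z hz =>
            ⟨(hA1sub hcA1).1.trans hz.1.le, hz.2.le.trans (hA1sub hdA1).2⟩
          exact hnm (hfsubI (hfmaps hp)) (hfsubI (hfmaps hq)) (fmono hp hq hpq)
        exact (gmono.lt_iff_lt (hspec p hp).1 (hspec q hq).1).1 h1
      · intro s' hs'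
        have hw' : g s' ∈ Ioo (τ1 c) (τ1 d) := hgmaps hs'
        obtain ⟨z, hzI, hz⟩ := hnsurjcd hw'
        obtain ⟨p, hpI, hp⟩ := hfsurj hzI
        refine ⟨p, hpI, ?_⟩
        have h1 := (hspec p hpI).2
        rw [hp, hz] at h1
        exact gmono.injOn (hspec p hpI).1 hs' h1
    · -- f decreasing on the gap
      obtain ⟨hcd, hfmaps, hfsurj⟩ := anti_gap hab hfc fanti hlc hld
      have hτcd : τ1 d < τ1 c := hτ1 hdA1 hcA1 hcd
      have ganti : StrictAntiOn g (Ioo (τ2 a) (τ2 b)) := by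
        rcases hgm with gm | ga
        · obtain ⟨h', -, -⟩ := mono_gap hτab hgc gm hglc hgld
          exact absurd hτcd (by linarith)
        · exact ga
      obtain ⟨-, hgmaps, hgsurj⟩ := anti_gap hτab hgc ganti hglc hgld
      obtain ⟨hnmapscd, hnsurjcd⟩ := mono_restrict hA1sub hB1sub hτ1b.mapsTo hnm hnsurj
        hneq hdA1 hcA1 hcd
      have hspec : ∀ p ∈ Ioo a b, lift p ∈ Ioo (τ2 a) (τ2 b) ∧ g (lift p) = hn (f p) := by
        intro p hp
        have hw : hn (f p) ∈ Ioo (τ1 d) (τ1 c) := hnmapscd (hfmaps hp)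
        obtain ⟨s0, hs0I, hs0⟩ := hgsurj hw
        have := liftExt_spec (hApts p hp) ha hb hgap hp hs0I hs0 ganti.injOn
        rw [hliftdef, this]
        exact ⟨hs0I, hs0⟩
      refine ⟨fun p hp => (hspec p hp).1, ?_, ?_, fun p hp => (hspec p hp).2⟩
      · intro p hp q hq hpq
        have h1 : g (lift q) < g (lift p) := by
          rw [(hspec p hp).2, (hspec q hq).2]
          have hfsubI : Ioo d c ⊆ Icc x1 y1 := fun z hz =>
            ⟨(hA1sub hdA1).1.trans hz.1.le, hz.2.le.trans (hA1sub hcA1).2⟩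
          exact hnm (hfsubI (hfmaps hq)) (hfsubI (hfmaps hp)) (fanti hp hq hpq)
        exact (ganti.lt_iff_gt (hspec q hq).1 (hspec p hp).1).1 h1
      · intro s' hs'
        have hw' : g s' ∈ Ioo (τ1 d) (τ1 c) := hgmaps hs'
        obtain ⟨z, hzI, hz⟩ := hnsurjcd hw'
        obtain ⟨p, hpI, hp⟩ := hfsurj hzI
        refine ⟨p, hpI, ?_⟩
        have h1 := (hspec p hpI).2
        rw [hp, hz] at h1
        exact ganti.injOn (hspec p hpI).1 hs' h1
  have heqOn : EqOn lift τ2 A2 := by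
    intro p hp
    simp only [hliftdef, liftExt, if_pos hp]
  refine ⟨⟨heqOn, fun a b ha hb hab hgap => (gapcore a b ha hb hab hgap).1,
    fun a b ha hb hab hgap => (gapcore a b ha hb hab hgap).2.1,
    fun a b ha hb hab hgap => (gapcore a b ha hb hab hgap).2.2.1⟩, ?_⟩
  intro p hp
  by_cases hpA : p ∈ A2
  · rw [heqOn hpA]
    have hfp : f p ∈ A1 := hfA hpA
    have h1 : g (τ2 p) = τ1 (f p) := (hfg p hpA (f p) hfp).1 rfl
    rw [h1, hneq hfp]
  · obtain ⟨haA, hbA, hap, hpb, hgap⟩ := gap_spec GA2 hp hpA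
    exact (gapcore _ _ haA hbA (lt_trans hap hpb) hgap).2.2.2 p ⟨hap, hpb⟩

noncomputable def hSeq (A : ℕ → Set ℝ) (τ : ℕ → ℝ → ℝ) (f g : ℕ → ℝ → ℝ) : ℕ → ℝ → ℝ
  | 0 => affExt (A 0) (τ 0)
  | (n+1) => liftExt (A (n+1)) (τ (n+1)) (g n) (hSeq A τ f g n) (f n)

end Stmt15Aux


open Set Filter Stmt15Aux in
theorem stmt_15
    (x y u v : ℕ → ℝ) (hxy : ∀ n, x n < y n) (huv : ∀ n, u n < v n)
    (f g : ℕ → ℝ → ℝ)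
    (hfmaps : ∀ n, Set.MapsTo (f n) (Set.Icc (x (n+1)) (y (n+1))) (Set.Icc (x n) (y n)))
    (hgmaps : ∀ n, Set.MapsTo (g n) (Set.Icc (u (n+1)) (v (n+1))) (Set.Icc (u n) (v n)))
    (A B : ℕ → Set ℝ)
    (hpattern : FollowSamePattern x y u v f g A B) :
    Nonempty
      (({p : ∀ n : ℕ, Set.Icc (x n) (y n) // ∀ n, (p n : ℝ) = f n (p (n+1))}) ≃ₜ
       ({q : ∀ n : ℕ, Set.Icc (u n) (v n) // ∀ n, (q n : ℝ) = g n (q (n+1))})) := by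
  obtain ⟨hMf, hMg, τ, φ, ψ, hτ0m, hτ0b, hφ, hψ, hτmaps, hcomm, hfg, hlim⟩ := hpattern
  -- good sets
  have GA : ∀ n, GoodSet (x n) (y n) (A n) := by
    intro n
    obtain ⟨-, -, -, -, -, h6, -, h8, h9, h10, -⟩ := hMf n
    exact ⟨h6, h8, h9, h10⟩
  have GB : ∀ n, GoodSet (u n) (v n) (B n) := by
    intro n
    obtain ⟨-, -, -, -, -, h6, -, h8, h9, h10, -⟩ := hMg n
    exact ⟨h6, h8, h9, h10⟩
  -- τ properties
  have τprop : ∀ n, StrictMonoOn (τ n) (A n) ∧ Set.BijOn (τ n) (A n) (B n) := by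
    intro n
    induction n with
    | zero => exact ⟨hτ0m, hτ0b⟩
    | succ n ih =>
      obtain ⟨ihm, ihb⟩ := ih
      obtain ⟨hφm, hφb⟩ := hφ n
      obtain ⟨hψm, hψb⟩ := hψ n
      constructor
      · intro p hp q hq hpq
        have h1 : ψ n (τ (n+1) p) < ψ n (τ (n+1) q) := by
          rw [hcomm n p hp, hcomm n q hq]
          exact ihm (hφb.mapsTo hp) (hφb.mapsTo hq) (hφm hp hq hpq)
        exact (hψm.lt_iff_lt (hτmaps n hp) (hτmaps n hq)).1 h1
      · refine ⟨hτmaps n, ?_, ?_⟩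
        · intro p hp q hq hpq
          have h1 : ψ n (τ (n+1) p) = ψ n (τ (n+1) q) := by rw [hpq]
          rw [hcomm n p hp, hcomm n q hq] at h1
          exact hφb.injOn hp hq (ihb.injOn (hφb.mapsTo hp) (hφb.mapsTo hq) h1)
        · intro w hw
          obtain ⟨z, hz, hτz⟩ := ihb.surjOn (hψb.mapsTo hw)
          obtain ⟨p, hp, hφp⟩ := hφb.surjOn hz
          refine ⟨p, hp, hψb.injOn (hτmaps n hp) hw ?_⟩
          rw [hcomm n p hp, hφp, hτz]
  set h' := hSeq A τ f g with hh'
  -- main properties of the extensions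
  have hprop : ∀ n, StrictMonoOn (h' n) (Set.Icc (x n) (y n)) ∧
      Set.MapsTo (h' n) (Set.Icc (x n) (y n)) (Set.Icc (u n) (v n)) ∧
      Set.SurjOn (h' n) (Set.Icc (x n) (y n)) (Set.Icc (u n) (v n)) ∧
      Set.EqOn (h' n) (τ n) (A n) := by
    intro n
    induction n with
    | zero =>
      have hext : ExtFun (A 0) (τ 0) (h' 0) := affExt_extFun (τprop 0).1
      exact ⟨ext_mono (GA 0) (τprop 0).1 hext,
        ext_mapsTo (GA 0) (GB 0) (τprop 0).2.mapsTo hext,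
        ext_surj (GA 0) (GB 0) (τprop 0).1 (τprop 0).2 hext, hext.eqOn⟩
    | succ n ih =>
      have hstep := step (hMf n) (hMg n) (τprop n).1 (τprop n).2 (τprop (n+1)).1
        (τprop (n+1)).2 (hfg n) (hlim n) ih.1 ih.2.1 ih.2.2.1 ih.2.2.2
      have hext : ExtFun (A (n+1)) (τ (n+1)) (h' (n+1)) := hstep.1
      exact ⟨ext_mono (GA (n+1)) (τprop (n+1)).1 hext,
        ext_mapsTo (GA (n+1)) (GB (n+1)) (τprop (n+1)).2.mapsTo hext,
        ext_surj (GA (n+1)) (GB (n+1)) (τprop (n+1)).1 (τprop (n+1)).2 hext, hext.eqOn⟩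
  have conj : ∀ n, ∀ p ∈ Set.Icc (x (n+1)) (y (n+1)),
      g n (h' (n+1) p) = h' n (f n p) := by
    intro n
    exact (step (hMf n) (hMg n) (τprop n).1 (τprop n).2 (τprop (n+1)).1
      (τprop (n+1)).2 (hfg n) (hlim n) (hprop n).1 (hprop n).2.1 (hprop n).2.2.1
      (hprop n).2.2.2).2
  have himg : ∀ n, h' n '' (Set.Icc (x n) (y n)) = Set.Icc (u n) (v n) := fun n =>
    Set.Subset.antisymm ((hprop n).2.1.image_subset) (hprop n).2.2.1
  let E : ∀ n, (Set.Icc (x n) (y n)) ≃o (Set.Icc (u n) (v n)) := fun n =>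
    ((hprop n).1.orderIso (h' n) _).trans (OrderIso.setCongr _ _ (himg n))
  have hE : ∀ n (s : Set.Icc (x n) (y n)), (E n s : ℝ) = h' n s := fun n s => rfl
  have hEs : ∀ n (q : Set.Icc (u n) (v n)), h' n ((E n).symm q : ℝ) = q := by
    intro n q
    rw [← hE n ((E n).symm q), (E n).apply_symm_apply]
  refine ⟨{
    toFun := fun p => ⟨fun n => E n (p.1 n), ?_⟩
    invFun := fun q => ⟨fun n => (E n).symm (q.1 n), ?_⟩
    left_inv := ?_
    right_inv := ?_
    continuous_toFun := ?_
    continuous_invFun := ?_ }⟩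
  · intro n
    rw [hE, hE, p.2 n]
    exact (conj n _ (p.1 (n+1)).2).symm
  · intro n
    apply (hprop n).1.injOn ((E n).symm (q.1 n)).2 (hfmaps n ((E (n+1)).symm (q.1 (n+1))).2)
    rw [hEs, ← conj n _ ((E (n+1)).symm (q.1 (n+1))).2, hEs, q.2 n]
  · intro p
    apply Subtype.ext
    funext n
    exact (E n).symm_apply_apply _
  · intro q
    apply Subtype.ext
    funext n
    exact (E n).apply_symm_apply _
  · apply Continuous.subtype_mk
    apply continuous_pi
    intro n
    exact ((E n).continuous).comp ((continuous_apply n).comp continuous_subtype_val)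
  · apply Continuous.subtype_mk
    apply continuous_pi
    intro n
    exact ((E n).symm.continuous).comp ((continuous_apply n).comp continuous_subtype_val)
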